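/- For every real w with w ≥ x_V/x_U there exists a unique x₁(w) in the open interval (0, x_V/w) such that U(x₁(w))·V(w·x₁(w)) = 1; moreover this solution satisfies x₁(w) < x_U. -/

import Mathlib

open Filter Topology Set

/-- For every real w with w ≥ x_V/x_U there exists a unique x₁(w) in
(0, x_V/w) such that U(x₁(w))·V(w·x₁(w)) = 1; moreover this solution satisfies
x₁(w) < x_U. -/
theorem stmt_0
    (p b : ℕ → ℝ)
    (hp : ∀ n, 0 ≤ p n) (hp0 : p 0 = 0)
    (hb : ∀ n, 0 ≤ b n) (hb0 : 0 < b 0)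
    (hpN : ∃ N, 1 ≤ N ∧ 0 < p N) (hbM : ∃ M, 1 ≤ M ∧ 0 < b M)
    (U V : ℝ → ℝ)
    (hU : ∀ x, U x = ∑' n, p n * x ^ n)
    (hV : ∀ x, V x = ∑' n, b n * x ^ n)
    (xU xV : ℝ) (hxU0 : 0 < xU) (hxUV : xU < xV) (hxV1 : xV ≤ 1)
    (hUconv : ∀ x : ℝ, 0 ≤ x → x < xU → Summable fun n => p n * x ^ n)
    (hUdiv : ∀ x : ℝ, xU < x → ¬ Summable fun n => p n * x ^ n)
    (hVconv : ∀ x : ℝ, 0 ≤ x → x < xV → Summable fun n => b n * x ^ n)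
    (hVdiv : ∀ x : ℝ, xV < x → ¬ Summable fun n => b n * x ^ n)
    (hVinf : Filter.Tendsto V (𝓝[<] xV) Filter.atTop)
    (w : ℝ) (hw : xV / xU ≤ w) :
    (∃! x : ℝ, x ∈ Set.Ioo 0 (xV / w) ∧ U x * V (w * x) = 1) ∧
      (∀ x : ℝ, x ∈ Set.Ioo 0 (xV / w) → U x * V (w * x) = 1 → x < xU) := by
  obtain ⟨N, hN1, hpN⟩ := hpN
  have hxV0 : (0:ℝ) < xV := lt_trans hxU0 hxUV
  have hw1 : (1:ℝ) < xV / xU := (one_lt_div hxU0).2 hxUV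
  have hw0 : (0:ℝ) < w := lt_trans one_pos (lt_of_lt_of_le hw1 hw)
  set ρ := xV / w with hρ
  have hρ0 : 0 < ρ := div_pos hxV0 hw0
  have hρxU : ρ ≤ xU := by
    rw [hρ, div_le_iff₀ hw0]
    have := mul_le_mul_of_nonneg_right hw hxU0.le
    rw [div_mul_cancel₀ _ (ne_of_gt hxU0)] at this
    linarith
  have hwρ : w * ρ = xV := by rw [hρ]; field_simp [hw0.ne']
  -- Monotonicity of U (strict) on [0, xU)
  have hUmono : ∀ x y : ℝ, 0 ≤ x → x < y → y < xU → U x < U y := by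
    intro x y hx hxy hy
    rw [hU, hU]
    refine Summable.tsum_lt_tsum (i := N) ?_ ?_ ?_ ?_
    · intro n
      exact mul_le_mul_of_nonneg_left (pow_le_pow_left₀ hx hxy.le n) (hp n)
    · exact mul_lt_mul_of_pos_left (pow_lt_pow_left₀ hxy hx (by omega)) hpN
    · exact hUconv x hx (lt_trans hxy hy)
    · exact hUconv y (le_trans hx hxy.le) hy
  -- Monotonicity of V on [0, xV)
  have hVmono : ∀ a c : ℝ, 0 ≤ a → a ≤ c → c < xV → V a ≤ V c := by
    intro a c ha hac hc
    rw [hV, hV]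
    refine Summable.tsum_le_tsum ?_ (hVconv a ha (lt_of_le_of_lt hac hc))
      (hVconv c (le_trans ha hac) hc)
    intro n
    exact mul_le_mul_of_nonneg_left (pow_le_pow_left₀ ha hac n) (hb n)
  -- Positivity
  have hVpos : ∀ a : ℝ, 0 ≤ a → a < xV → 0 < V a := by
    intro a ha hax
    rw [hV]
    have h0 : b 0 * a ^ 0 ≤ ∑' n, b n * a ^ n :=
      Summable.le_tsum (hVconv a ha hax) 0 (fun j _ => mul_nonneg (hb j) (pow_nonneg ha j))
    simpa using lt_of_lt_of_le (by simpa using hb0) h0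
  have hUpos : ∀ x : ℝ, 0 < x → x < xU → 0 < U x := by
    intro x hx hxx
    rw [hU]
    have h0 : p N * x ^ N ≤ ∑' n, p n * x ^ n :=
      Summable.le_tsum (hUconv x hx.le hxx) N (fun j _ => mul_nonneg (hp j) (pow_nonneg hx.le j))
    exact lt_of_lt_of_le (mul_pos hpN (pow_pos hx N)) h0
  have hU0 : U 0 = 0 := by
    rw [hU]
    have : (fun n => p n * (0:ℝ) ^ n) = fun _ => (0:ℝ) := by
      funext n
      cases n with
      | zero => simp [hp0]
      | succ k => simp
    rw [this, tsum_zero]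
  -- Strict monotonicity of F := fun x => U x * V (w * x) on Ioo 0 ρ
  have key : ∀ a c : ℝ, a ∈ Set.Ioo 0 ρ → c ∈ Set.Ioo 0 ρ → a < c →
      U a * V (w * a) < U c * V (w * c) := by
    intro a c ha hc hac
    have hwa : w * a < xV := by
      have := mul_lt_mul_of_pos_left ha.2 hw0
      rwa [hwρ] at this
    have hwc : w * c < xV := by
      have := mul_lt_mul_of_pos_left hc.2 hw0
      rwa [hwρ] at this
    have h1 : U a < U c := hUmono a c ha.1.le hac (lt_of_lt_of_le hc.2 hρxU)
    have h2 : V (w * a) ≤ V (w * c) :=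
      hVmono _ _ (mul_nonneg hw0.le ha.1.le)
        (mul_le_mul_of_nonneg_left hac.le hw0.le) hwc
    have hVa : 0 < V (w * a) := hVpos _ (mul_nonneg hw0.le ha.1.le) hwa
    have hUa : 0 < U a := hUpos a ha.1 (lt_of_lt_of_le ha.2 hρxU)
    nlinarith
  -- Continuity of F on [0, r] for r < ρ
  have hFcont : ∀ r : ℝ, 0 ≤ r → r < ρ →
      ContinuousOn (fun x => U x * V (w * x)) (Set.Icc 0 r) := by
    intro r hr0 hrρ
    have hrU : r < xU := lt_of_lt_of_le hrρ hρxU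
    have hUc : ContinuousOn U (Set.Icc 0 r) := by
      have hUeq : U = fun x => ∑' n, p n * x ^ n := funext hU
      rw [hUeq]
      refine continuousOn_tsum (u := fun n => p n * r ^ n)
        (fun n => (continuous_const.mul (continuous_pow n)).continuousOn)
        (hUconv r hr0 hrU) ?_
      intro n x hx
      rw [Real.norm_eq_abs, abs_of_nonneg (mul_nonneg (hp n) (pow_nonneg hx.1 n))]
      exact mul_le_mul_of_nonneg_left (pow_le_pow_left₀ hx.1 hx.2 n) (hp n)
    have hwrV : w * r < xV := by
      have := mul_lt_mul_of_pos_left hrρ hw0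
      rwa [hwρ] at this
    have hVc : ContinuousOn V (Set.Icc 0 (w * r)) := by
      have hVeq : V = fun x => ∑' n, b n * x ^ n := funext hV
      rw [hVeq]
      refine continuousOn_tsum (u := fun n => b n * (w * r) ^ n)
        (fun n => (continuous_const.mul (continuous_pow n)).continuousOn)
        (hVconv (w * r) (mul_nonneg hw0.le hr0) hwrV) ?_
      intro n x hx
      rw [Real.norm_eq_abs, abs_of_nonneg (mul_nonneg (hb n) (pow_nonneg hx.1 n))]
      exact mul_le_mul_of_nonneg_left (pow_le_pow_left₀ hx.1 hx.2 n) (hb n)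
    have hmap : Set.MapsTo (fun x => w * x) (Set.Icc 0 r) (Set.Icc 0 (w * r)) := by
      intro x hx
      exact ⟨mul_nonneg hw0.le hx.1, mul_le_mul_of_nonneg_left hx.2 hw0.le⟩
    exact hUc.mul (hVc.comp ((continuous_const.mul continuous_id).continuousOn) hmap)
  -- Find r close to ρ with F r > 1
  have hc0 : 0 < U (ρ / 2) := hUpos _ (by linarith) (by linarith)
  set c := U (ρ / 2) with hcdef
  have hW : Filter.Tendsto (fun x => w * x) (𝓝[<] ρ) (𝓝[<] xV) := by
    refine tendsto_nhdsWithin_of_tendsto_nhds_of_eventually_within _ ?_ ?_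
    · have : Filter.Tendsto (fun x => w * x) (𝓝 ρ) (𝓝 (w * ρ)) :=
        (continuous_const.mul continuous_id).tendsto ρ
      rw [hwρ] at this
      exact this.mono_left nhdsWithin_le_nhds
    · filter_upwards [eventually_mem_nhdsWithin] with x hx
      have : w * x < w * ρ := mul_lt_mul_of_pos_left hx hw0
      rwa [hwρ] at this
  have hVW : Filter.Tendsto (fun x => V (w * x)) (𝓝[<] ρ) Filter.atTop :=
    hVinf.comp hW
  have ev1 : ∀ᶠ x in 𝓝[<] ρ, 1 / c < V (w * x) := hVW.eventually_gt_atTop (1 / c)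
  have ev2 : ∀ᶠ x in 𝓝[<] ρ, x ∈ Set.Ioo (ρ / 2) ρ :=
    Ioo_mem_nhdsLT_of_mem ⟨by linarith, le_refl ρ⟩
  obtain ⟨r, hr1, hr2⟩ := (ev1.and ev2).exists
  have hrρ : r < ρ := hr2.2
  have hr0 : 0 < r := lt_trans (by linarith) hr2.1
  have hFr : 1 < U r * V (w * r) := by
    have hUr : c < U r := hUmono _ _ (by linarith) hr2.1 (lt_of_lt_of_le hrρ hρxU)
    have hVr : 1 / c < V (w * r) := hr1
    have h1c : 0 < 1 / c := by positivity
    calc (1:ℝ) = c * (1 / c) := by field_simp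
    _ < U r * V (w * r) := by nlinarith
  -- IVT for existence
  have hF0 : U 0 * V (w * 0) = 0 := by rw [hU0]; ring
  have hsub : Set.Icc (U 0 * V (w * 0)) (U r * V (w * r)) ⊆
      (fun x => U x * V (w * x)) '' Set.Icc 0 r :=
    intermediate_value_Icc hr0.le (hFcont r hr0.le hrρ)
  obtain ⟨x, hxmem, hFx⟩ := hsub ⟨by rw [hF0]; norm_num, hFr.le⟩
  replace hFx : U x * V (w * x) = 1 := hFx
  have hx0 : 0 < x := by
    rcases eq_or_lt_of_le hxmem.1 with h | h
    · exfalso; rw [← h] at hFx; rw [hF0] at hFx; norm_num at hFx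
    · exact h
  have hxρ : x < ρ := lt_of_le_of_lt hxmem.2 hrρ
  constructor
  · refine ⟨x, ⟨⟨hx0, hxρ⟩, hFx⟩, ?_⟩
    rintro y ⟨hy, hFy⟩
    rcases lt_trichotomy y x with h | h | h
    · exfalso
      have := key y x hy ⟨hx0, hxρ⟩ h
      rw [hFx, hFy] at this
      exact lt_irrefl 1 this
    · exact h
    · exfalso
      have := key x y ⟨hx0, hxρ⟩ hy h
      rw [hFx, hFy] at this
      exact lt_irrefl 1 this
  · intro z hz _
    exact lt_of_lt_of_le hz.2 hρxU
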